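/- arXiv:2601.22829 — 3 statements merged into one kernel-verified Lean document; each statement's English description precedes it below -/
import Mathlib

section
/- Let e₁, …, e_m be measurable real-valued functions on a measure space (S, μ) with μ(S) > 0, m ≥ 2, such that ∫_S b · eᵣ · e_s dμ = C(b) δ_{rs} for every bounded measurable function b : S → ℝ (with C(b) ∈ ℝ depending on b). Then eᵣ(x) e_s(x) = 0 for r ≠ s and e₁(x)² = e₂(x)² = … = e_m(x)² for almost every x ∈ S. In particular, if m ≥ 2 then e₁ e₂ = 0 and e₁² = e₂² a.e., hence e₁ = e₂ = … = e_m = 0 almost everywhere on S. -/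
open MeasureTheory

lemma aux_mul_integrable {α : Type*} [MeasurableSpace α] {μ : Measure α} {f g : α → ℝ}
    (hf : MemLp f 2 μ) (hg : MemLp g 2 μ) : Integrable (fun x => f x * g x) μ := by
  refine Integrable.mono' (hf.integrable_sq.add hg.integrable_sq)
    (hf.aestronglyMeasurable.mul hg.aestronglyMeasurable) (Filter.Eventually.of_forall ?_)
  intro x
  simp only [Pi.add_apply, Real.norm_eq_abs]
  nlinarith [abs_mul (f x) (g x), sq_abs (f x), sq_abs (g x), abs_nonneg (f x * g x),
    sq_nonneg (|f x| - |g x|), abs_nonneg (f x), abs_nonneg (g x)]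

lemma aux_key {α : Type*} [MeasurableSpace α] {μ : Measure α} {f : α → ℝ}
    (hf : Integrable f μ)
    (h : ∀ b : α → ℝ, Measurable b → (∃ C, ∀ x, |b x| ≤ C) → ∫ x, b x * f x ∂μ = 0) :
    f =ᵐ[μ] 0 := by
  refine hf.ae_eq_zero_of_forall_setIntegral_eq_zero (fun s hs _ => ?_)
  have hb : Measurable (s.indicator (fun _ => (1 : ℝ))) := measurable_one.indicator hs
  have := h (s.indicator fun _ => 1) hb ⟨1, fun x => by
    by_cases hx : x ∈ s <;> simp [Set.indicator, hx]⟩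
  rw [← this, ← integral_indicator hs]
  refine integral_congr_ae (Filter.Eventually.of_forall fun x => ?_)
  by_cases hx : x ∈ s <;> simp [Set.indicator, hx]

/-- If `e₁, …, e_m` (`m ≥ 2`) are `L²` functions on a measure space of positive
measure such that `∫ b eᵣ e_s dμ = C(b) δ_{rs}` for every bounded measurable `b`, then
`eᵣ e_s = 0` a.e. for `r ≠ s`, the squares `eᵣ²` all coincide a.e., and hence
every `eᵣ` vanishes almost everywhere. -/
theorem stmt10 {α : Type*} [MeasurableSpace α] (μ : Measure α) (hμ : μ Set.univ ≠ 0)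
    (m : ℕ) (hm : 2 ≤ m) (e : Fin m → α → ℝ)
    (hL2 : ∀ r, MemLp (e r) 2 μ)
    (H : ∀ b : α → ℝ, Measurable b → (∃ C, ∀ x, |b x| ≤ C) →
      ∃ c : ℝ, ∀ r s, ∫ x, b x * (e r x * e s x) ∂μ = if r = s then c else 0) :
    (∀ r s, r ≠ s → ∀ᵐ x ∂μ, e r x * e s x = 0) ∧
    (∀ r s, ∀ᵐ x ∂μ, (e r x) ^ 2 = (e s x) ^ 2) ∧
    (∀ r, ∀ᵐ x ∂μ, e r x = 0) := by
  have hint : ∀ r s, Integrable (fun x => e r x * e s x) μ :=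
    fun r s => aux_mul_integrable (hL2 r) (hL2 s)
  have h1 : ∀ r s : Fin m, r ≠ s → (fun x => e r x * e s x) =ᵐ[μ] 0 := by
    intro r s hrs
    refine aux_key (hint r s) (fun b hb hbd => ?_)
    obtain ⟨c, hc⟩ := H b hb hbd
    simpa [hrs] using hc r s
  have h2 : ∀ r s : Fin m, (fun x => (e r x) ^ 2 - (e s x) ^ 2) =ᵐ[μ] 0 := by
    intro r s
    have hi : Integrable (fun x => (e r x) ^ 2 - (e s x) ^ 2) μ := by
      simp only [sq]; exact (hint r r).sub (hint s s)
    refine aux_key hi (fun b hb hbd => ?_)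
    obtain ⟨c, hc⟩ := H b hb hbd
    have hr := hc r r
    have hs := hc s s
    simp only [if_pos rfl] at hr hs
    have : ∫ x, (b x * (e r x * e r x) - b x * (e s x * e s x)) ∂μ = 0 := by
      rw [integral_sub ((hint r r).bdd_mul hb.aestronglyMeasurable
          (Filter.Eventually.of_forall fun x => (Real.norm_eq_abs (b x)).le.trans (hbd.choose_spec x)))
        ((hint s s).bdd_mul hb.aestronglyMeasurable
          (Filter.Eventually.of_forall fun x => (Real.norm_eq_abs (b x)).le.trans (hbd.choose_spec x))), hr, hs, sub_self]
    rw [← this]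
    refine integral_congr_ae (Filter.Eventually.of_forall fun x => ?_)
    ring
  refine ⟨fun r s hrs => h1 r s hrs, fun r s => (h2 r s).mono fun x hx => by
    simp only [Pi.zero_apply] at hx; linarith [sub_eq_zero.mp hx], ?_⟩
  intro r
  have : ∃ s : Fin m, s ≠ r := by
    by_cases h0 : r = ⟨0, by omega⟩
    · exact ⟨⟨1, by omega⟩, by simp [h0, Fin.ext_iff]⟩
    · exact ⟨⟨0, by omega⟩, fun h => h0 h.symm⟩
  obtain ⟨s, hs⟩ := this
  filter_upwards [h1 r s (fun h => hs h.symm), h2 r s] with x hx1 hx2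
  simp only [Pi.zero_apply] at hx1 hx2
  have h4 : e r x ^ 4 = 0 := by nlinarith
  exact pow_eq_zero_iff (by norm_num) |>.mp h4
end

section
/- Let (X, a) be a real Hilbert space, c a continuous symmetric nonnegative bilinear form on X, and let E be defined by a(E f, φ) = c(f, φ). Suppose b ↦ A_b is a family of continuous symmetric coercive bilinear forms on X, Fréchet differentiable in b at b = 0 with A_0 = a, and define E_b by A_b(E_b f, φ) = c(f, φ). Then b ↦ E_b is Fréchet differentiable at b = 0 (in operator norm), and its derivative satisfies A'(0)[b](E f, φ) + a(E'(0)[b] f, φ) = 0 for all f, φ ∈ X. -/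
set_option maxHeartbeats 1000000
set_option synthInstance.maxHeartbeats 400000


open scoped RealInnerProductSpace

private lemma aux_div {a K n : ℝ} (ha : 0 < a) (hK : 0 ≤ K) (hn : 0 ≤ n)
    (h : a * n ^ 2 ≤ K * n) : n ≤ K / a := by
  rcases eq_or_lt_of_le hn with h0 | h0
  · rw [← h0]; positivity
  · rw [le_div_iff₀ ha]
    nlinarith

/-- Differentiability of the Lax–Milgram solution operator: let `(X, a)` be a real
Hilbert space (`a = ⟪·,·⟫`), `c` a continuous symmetric nonnegative bilinear form, and
`b ↦ A_b` a family of continuous symmetric bilinear forms, uniformly coercive for `b`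
in a neighborhood `V` of `0`, Fréchet differentiable at `b = 0` with `A_0 = a` and
derivative `A'`. If `E_b` is defined by `A_b(E_b f, φ) = c(f, φ)`, then `b ↦ E_b` is
Fréchet differentiable at `b = 0` with derivative `D` satisfying
`A'(0)[b](E₀ f, φ) + a(D[b] f, φ) = 0` for all `f, φ`. -/
theorem stmt15 {X B : Type*} [NormedAddCommGroup X] [InnerProductSpace ℝ X]
    [CompleteSpace X] [NormedAddCommGroup B] [NormedSpace ℝ B]
    (c : X →L[ℝ] X →L[ℝ] ℝ) (hc_symm : ∀ u v, c u v = c v u) (hc_nonneg : ∀ u, 0 ≤ c u u)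
    (A : B → X →L[ℝ] X →L[ℝ] ℝ) (A' : B →L[ℝ] X →L[ℝ] X →L[ℝ] ℝ)
    (hA0 : ∀ u v, A 0 u v = ⟪u, v⟫) (hA_symm : ∀ b u v, A b u v = A b v u)
    (hdiff : HasFDerivAt A A' 0)
    (α : ℝ) (hα : 0 < α) (V : Set B) (hV : V ∈ nhds (0 : B))
    (hcoer : ∀ b ∈ V, ∀ u, α * ‖u‖ ^ 2 ≤ A b u u)
    (Efam : B → X →L[ℝ] X)
    (hEfam : ∀ b ∈ V, ∀ f φ, A b (Efam b f) φ = c f φ) :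
    ∃ D : B →L[ℝ] X →L[ℝ] X, HasFDerivAt Efam D 0 ∧
      ∀ (b : B) (f φ : X), A' b (Efam 0 f) φ + ⟪D b f, φ⟫ = 0 := by
  classical
  have h0V : (0 : B) ∈ V := mem_of_mem_nhds hV
  set E0 : X →L[ℝ] X := Efam 0 with hE0def
  -- Riesz representation as a continuous linear map
  set Jc : (X →L[ℝ] ℝ) →L[ℝ] X :=
    (InnerProductSpace.toDual ℝ X).symm.toLinearIsometry.toContinuousLinearMap with hJc
  have hJc_apply : ∀ (y : X →L[ℝ] ℝ) (x : X), ⟪Jc y, x⟫ = y x := by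
    intro y x
    exact InnerProductSpace.toDual_symm_apply
  -- the candidate derivative
  set D : B →L[ℝ] X →L[ℝ] X :=
    -((ContinuousLinearMap.compL ℝ X (X →L[ℝ] ℝ) X Jc).comp
        (((ContinuousLinearMap.compL ℝ X X (X →L[ℝ] ℝ)).flip E0).comp A')) with hD
  have hD_apply : ∀ (b : B) (f : X), D b f = -Jc (A' b (E0 f)) := by
    intro b f
    simp [hD]
  have hDinner : ∀ (b : B) (f φ : X), ⟪D b f, φ⟫ = -(A' b (E0 f) φ) := by
    intro b f φ
    rw [hD_apply, inner_neg_left, hJc_apply]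
  refine ⟨D, ?_, ?_⟩
  swap
  · intro b f φ
    rw [hDinner]; ring
  -- `E0` represents `c` against the inner product
  have hE0 : ∀ f φ, ⟪E0 f, φ⟫ = c f φ := by
    intro f φ
    rw [← hA0]; exact hEfam 0 h0V f φ
  set C0 : ℝ := ‖c‖ / α with hC0
  have hC0nn : 0 ≤ C0 := by positivity
  -- uniform bound on `Efam b`
  have hbnd1 : ∀ b ∈ V, ∀ f : X, ‖Efam b f‖ ≤ C0 * ‖f‖ := by
    intro b hb f
    have h1 : α * ‖Efam b f‖ ^ 2 ≤ A b (Efam b f) (Efam b f) := hcoer b hb _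
    have h2 : A b (Efam b f) (Efam b f) = c f (Efam b f) := hEfam b hb f _
    have h3 : c f (Efam b f) ≤ (‖c‖ * ‖f‖) * ‖Efam b f‖ := by
      calc c f (Efam b f) ≤ |c f (Efam b f)| := le_abs_self _
        _ ≤ ‖c‖ * ‖f‖ * ‖Efam b f‖ := c.le_opNorm₂ f _
    have h4 : α * ‖Efam b f‖ ^ 2 ≤ (‖c‖ * ‖f‖) * ‖Efam b f‖ := by
      calc α * ‖Efam b f‖ ^ 2 ≤ A b (Efam b f) (Efam b f) := h1
        _ = c f (Efam b f) := h2
        _ ≤ ‖c‖ * ‖f‖ * ‖Efam b f‖ := h3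
    have h5 := aux_div hα (by positivity) (norm_nonneg _) h4
    calc ‖Efam b f‖ ≤ ‖c‖ * ‖f‖ / α := h5
      _ = C0 * ‖f‖ := by rw [hC0]; ring
  -- bound on `Efam b - E0`
  have hbnd2 : ∀ b ∈ V, ∀ f : X,
      ‖Efam b f - E0 f‖ ≤ ‖A b - A 0‖ * C0 / α * ‖f‖ := by
    intro b hb f
    set u : X := Efam b f - E0 f with hu
    have h1 : α * ‖u‖ ^ 2 ≤ A b u u := hcoer b hb u
    have h2 : A b u u = A 0 (E0 f) u - A b (E0 f) u := by
      have e1 : A b (Efam b f) u = c f u := hEfam b hb f u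
      have e2 : A 0 (E0 f) u = c f u := by rw [hA0]; exact hE0 f u
      have : A b u u = A b (Efam b f) u - A b (E0 f) u := by
        rw [hu]; simp only [map_sub, ContinuousLinearMap.sub_apply]
        rw [hA_symm b (Efam b f) (E0 f)]
      rw [this, e1, e2]
    have h3 : A 0 (E0 f) u - A b (E0 f) u ≤ ‖A b - A 0‖ * ‖E0 f‖ * ‖u‖ := by
      have : A 0 (E0 f) u - A b (E0 f) u = ((A 0 - A b) (E0 f)) u := by
        simp [ContinuousLinearMap.sub_apply]
      rw [this]
      calc ((A 0 - A b) (E0 f)) u ≤ |((A 0 - A b) (E0 f)) u| := le_abs_self _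
        _ ≤ ‖A 0 - A b‖ * ‖E0 f‖ * ‖u‖ := (A 0 - A b).le_opNorm₂ _ _
        _ = ‖A b - A 0‖ * ‖E0 f‖ * ‖u‖ := by rw [norm_sub_rev (A 0) (A b)]
    have hle : α * ‖u‖ ^ 2 ≤ (‖A b - A 0‖ * ‖E0 f‖) * ‖u‖ := by
      calc α * ‖u‖ ^ 2 ≤ A b u u := h1
        _ = A 0 (E0 f) u - A b (E0 f) u := h2
        _ ≤ ‖A b - A 0‖ * ‖E0 f‖ * ‖u‖ := h3
    have hdiv := aux_div hα (by positivity) (norm_nonneg u) hle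
    have hE0f : ‖E0 f‖ ≤ C0 * ‖f‖ := hbnd1 0 h0V f
    calc ‖u‖ ≤ ‖A b - A 0‖ * ‖E0 f‖ / α := hdiv
      _ ≤ ‖A b - A 0‖ * (C0 * ‖f‖) / α := by
          gcongr
      _ = ‖A b - A 0‖ * C0 / α * ‖f‖ := by ring
  -- the remainder bound
  set g : B → ℝ := fun b =>
    ‖A b - A 0 - A' b‖ * C0 + ‖A' b‖ * (‖A b - A 0‖ * C0 / α) with hg
  have hgnn : ∀ b, 0 ≤ g b := by intro b; rw [hg]; positivity
  have hmain : ∀ b ∈ V, ‖Efam b - E0 - D b‖ ≤ g b := by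
    intro b hb
    refine ContinuousLinearMap.opNorm_le_bound _ (hgnn b) fun f => ?_
    set r : X := Efam b f - E0 f - D b f with hr
    have hrapp : (Efam b - E0 - D b) f = r := by
      simp [hr, ContinuousLinearMap.sub_apply]
    rw [hrapp]
    -- key identity
    have hkey : ∀ φ : X, ⟪r, φ⟫ =
        -((A b - A 0 - A' b) (Efam b f) φ) - A' b (Efam b f - E0 f) φ := by
      intro φ
      have e1 : ⟪Efam b f, φ⟫ = A 0 (Efam b f) φ := (hA0 _ _).symm
      have e2 : ⟪E0 f, φ⟫ = A b (Efam b f) φ := by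
        rw [hE0 f φ]; exact (hEfam b hb f φ).symm
      have : ⟪r, φ⟫ = ⟪Efam b f, φ⟫ - ⟪E0 f, φ⟫ - ⟪D b f, φ⟫ := by
        rw [hr]; rw [inner_sub_left, inner_sub_left]
      rw [this, e1, e2, hDinner]
      simp [ContinuousLinearMap.sub_apply, map_sub]
      ring
    have hsq : ‖r‖ ^ 2 = ⟪r, r⟫ := (real_inner_self_eq_norm_sq r).symm
    have hb1 : -((A b - A 0 - A' b) (Efam b f) r) ≤ ‖A b - A 0 - A' b‖ * (C0 * ‖f‖) * ‖r‖ := by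
      calc -((A b - A 0 - A' b) (Efam b f) r) ≤ |(A b - A 0 - A' b) (Efam b f) r| :=
            neg_le_abs _
        _ ≤ ‖A b - A 0 - A' b‖ * ‖Efam b f‖ * ‖r‖ := (A b - A 0 - A' b).le_opNorm₂ _ _
        _ ≤ ‖A b - A 0 - A' b‖ * (C0 * ‖f‖) * ‖r‖ := by
            gcongr
            exact hbnd1 b hb f
    have hb2 : -(A' b (Efam b f - E0 f) r) ≤
        ‖A' b‖ * (‖A b - A 0‖ * C0 / α * ‖f‖) * ‖r‖ := by
      calc -(A' b (Efam b f - E0 f) r) ≤ |A' b (Efam b f - E0 f) r| := neg_le_abs _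
        _ ≤ ‖A' b‖ * ‖Efam b f - E0 f‖ * ‖r‖ := (A' b).le_opNorm₂ _ _
        _ ≤ ‖A' b‖ * (‖A b - A 0‖ * C0 / α * ‖f‖) * ‖r‖ := by
            gcongr
            exact hbnd2 b hb f
    have hle : (1 : ℝ) * ‖r‖ ^ 2 ≤ (g b * ‖f‖) * ‖r‖ := by
      rw [one_mul, hsq, hkey r, hg]
      have := add_le_add hb1 hb2
      calc -((A b - A 0 - A' b) (Efam b f) r) - A' b (Efam b f - E0 f) r
          ≤ ‖A b - A 0 - A' b‖ * (C0 * ‖f‖) * ‖r‖ +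
            ‖A' b‖ * (‖A b - A 0‖ * C0 / α * ‖f‖) * ‖r‖ := by linarith
        _ = (‖A b - A 0 - A' b‖ * C0 + ‖A' b‖ * (‖A b - A 0‖ * C0 / α)) * ‖f‖ * ‖r‖ := by
            ring
    have := aux_div one_pos (by positivity) (norm_nonneg r) hle
    simpa using this
  -- asymptotics: `g =o[𝓝 0] id`
  have hΔ := HasFDerivAt.isLittleO (𝕜 := ℝ) (E := B) (F := X →L[ℝ] X →L[ℝ] ℝ) (f := A) (f' := A') (x := 0) hdiff
  have hg1 : (fun b : B => ‖A b - A 0 - A' b‖ * C0) =o[nhds 0] fun b : B => b := by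
    have := (hΔ.norm_left).const_mul_left C0
    simpa [mul_comm] using this
  have hg2 : (fun b : B => ‖A' b‖ * (‖A b - A 0‖ * C0 / α)) =o[nhds 0] fun b : B => b := by
    have hAO := HasFDerivAt.isBigO_sub (𝕜 := ℝ) (E := B) (F := X →L[ℝ] X →L[ℝ] ℝ) (f := A) (f' := A') (x₀ := 0) hdiff
    have hA'O : (fun b : B => A' b) =O[nhds 0] fun b : B => b := by
      have h := hAO.sub hΔ.isBigO
      simpa [sub_sub_cancel] using h
    have h1 : (fun b : B => ‖A' b‖) =O[nhds 0] fun b : B => ‖b‖ := by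
      obtain ⟨C, hC⟩ := hA'O.bound
      rw [Asymptotics.isBigO_iff]
      exact ⟨C, hC.mono fun b hb => by
        calc ‖‖A' b‖‖ = ‖A' b‖ := Real.norm_of_nonneg (ContinuousLinearMap.opNorm_nonneg _)
          _ ≤ C * ‖b‖ := hb
          _ = C * ‖‖b‖‖ := by rw [norm_norm]⟩
    have h2 : (fun b : B => ‖A b - A 0‖ * C0 / α) =o[nhds 0] (fun _ : B => (1 : ℝ)) := by
      rw [Asymptotics.isLittleO_one_iff]
      have ht : Filter.Tendsto (fun b : B => ‖A b - A 0‖) (nhds 0) (nhds 0) := by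
        have hc : Filter.Tendsto (fun b : B => A b - A 0) (nhds 0) (nhds 0) := by
          refine hAO.trans_tendsto ?_
          simp only [sub_zero]; exact Filter.tendsto_id
        exact (tendsto_zero_iff_norm_tendsto_zero (E := X →L[ℝ] X →L[ℝ] ℝ)).mp hc
      have : Filter.Tendsto (fun b : B => ‖A b - A 0‖ * C0 / α) (nhds 0)
          (nhds (0 * C0 / α)) := (ht.mul_const C0).div_const α
      simpa using this
    have h3 := h1.mul_isLittleO h2
    have h4 : (fun b : B => ‖b‖ * 1) =O[nhds 0] fun b : B => b := by
      rw [Asymptotics.isBigO_iff]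
      exact ⟨1, Filter.Eventually.of_forall fun b => by simp⟩
    exact h3.trans_isBigO h4
  have hgo : g =o[nhds 0] fun b : B => b := by
    rw [hg]; exact hg1.add hg2
  -- conclude differentiability
  rw [hasFDerivAt_iff_isLittleO_nhds_zero]
  refine Asymptotics.IsBigO.trans_isLittleO ?_ hgo
  rw [Asymptotics.isBigO_iff]
  refine ⟨1, ?_⟩
  filter_upwards [hV] with b hb
  rw [one_mul, Real.norm_of_nonneg (hgnn b)]
  simpa using hmain b hb
end

section
/- Let Ω ⊂ ℝⁿ be a bounded C¹ domain with outward unit normal ν, ψ : ℝⁿ → ℝⁿ a C² vector field, and u, φ ∈ C²(closure(Ω)). Let F = u φ N where N is a C¹ extension of ν to a neighborhood of ∂Ω. Then ∫_Ω [∂ᵢFᵢ · div ψ − ∂_t Fᵢ · ∂ᵢψ_t] dx = ∫_{∂Ω} u φ (div ψ − ∑_r ∂_ν ψ_r ν_r) dσ, where summation over repeated indices is understood and ∂_ν ψ_r = ν·∇ψ_r. -/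
open MeasureTheory
open scoped RealInnerProductSpace

private lemma expand_clm {n : ℕ} (L : EuclideanSpace ℝ (Fin n) →L[ℝ] EuclideanSpace ℝ (Fin n))
    (v : EuclideanSpace ℝ (Fin n)) :
    L v = ∑ t, v t • L (EuclideanSpace.single t 1) := by
  conv_lhs => rw [show v = ∑ t, v t • EuclideanSpace.single t 1 by
    conv_lhs => rw [← (EuclideanSpace.basisFun (Fin n) ℝ).sum_repr v]
    simp [EuclideanSpace.basisFun_repr, EuclideanSpace.basisFun_apply]]
  simp [map_sum, _root_.map_smul]

private lemma div_identity {n : ℕ}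
    (ψ : EuclideanSpace ℝ (Fin n) → EuclideanSpace ℝ (Fin n)) (hψ : ContDiff ℝ 2 ψ)
    (F : EuclideanSpace ℝ (Fin n) → EuclideanSpace ℝ (Fin n)) (hF1 : ContDiff ℝ 1 F)
    (x : EuclideanSpace ℝ (Fin n)) :
    ∑ i, fderiv ℝ (fun y => (∑ j, fderiv ℝ ψ y (EuclideanSpace.single j 1) j) • F y
          - fderiv ℝ ψ y (F y)) x (EuclideanSpace.single i 1) i =
      (∑ i : Fin n, fderiv ℝ F x (EuclideanSpace.single i 1) i) *
          (∑ i : Fin n, fderiv ℝ ψ x (EuclideanSpace.single i 1) i) -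
        ∑ i : Fin n, ∑ t : Fin n,
          fderiv ℝ F x (EuclideanSpace.single t 1) i *
            fderiv ℝ ψ x (EuclideanSpace.single i 1) t := by
  have hψd : Differentiable ℝ ψ := hψ.differentiable two_ne_zero
  have hψ' : ContDiff ℝ 1 (fderiv ℝ ψ) := hψ.fderiv_right (le_refl 2)
  have hψ'd : Differentiable ℝ (fderiv ℝ ψ) := hψ'.differentiable one_ne_zero
  have hFd : Differentiable ℝ F := hF1.differentiable one_ne_zero
  set f'' := fderiv ℝ (fderiv ℝ ψ) x with hf''
  have hsymm : ∀ v w, f'' v w = f'' w v :=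
    second_derivative_symmetric (fun y => (hψd y).hasFDerivAt) (hψ'd x).hasFDerivAt
  have hdψ : HasFDerivAt (fderiv ℝ ψ) f'' x := (hψ'd x).hasFDerivAt
  have hdF : HasFDerivAt F (fderiv ℝ F x) x := (hFd x).hasFDerivAt
  have hdd : HasFDerivAt (fun y => ∑ j, fderiv ℝ ψ y (EuclideanSpace.single j 1) j)
      (∑ j, (EuclideanSpace.proj j).comp
        ((fderiv ℝ ψ x).comp (0 : EuclideanSpace ℝ (Fin n) →L[ℝ] EuclideanSpace ℝ (Fin n))
          + f''.flip (EuclideanSpace.single j 1))) x := by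
    apply HasFDerivAt.fun_sum
    intro j _
    exact (EuclideanSpace.proj j).hasFDerivAt.comp x
      (hdψ.clm_apply (hasFDerivAt_const (EuclideanSpace.single j 1) x))
  have hG : HasFDerivAt (fun y => (∑ j, fderiv ℝ ψ y (EuclideanSpace.single j 1) j) • F y
        - fderiv ℝ ψ y (F y))
      (((∑ j, fderiv ℝ ψ x (EuclideanSpace.single j 1) j) • fderiv ℝ F x
          + (∑ j, (EuclideanSpace.proj j).comp
            ((fderiv ℝ ψ x).comp (0 : EuclideanSpace ℝ (Fin n) →L[ℝ] EuclideanSpace ℝ (Fin n))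
              + f''.flip (EuclideanSpace.single j 1))).smulRight (F x))
        - ((fderiv ℝ ψ x).comp (fderiv ℝ F x) + f''.flip (F x))) x :=
    (hdd.smul hdF).sub (hdψ.clm_apply hdF)
  rw [hG.fderiv]
  simp only [ContinuousLinearMap.sub_apply, ContinuousLinearMap.add_apply,
    ContinuousLinearMap.comp_apply, ContinuousLinearMap.flip_apply,
    ContinuousLinearMap.smulRight_apply, ContinuousLinearMap.coe_smul',
    Pi.smul_apply, ContinuousLinearMap.zero_apply, map_zero,
    ContinuousLinearMap.sum_apply, PiLp.proj_apply, PiLp.sub_apply,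
    PiLp.add_apply, PiLp.smul_apply, smul_eq_mul, zero_add]
  have hsum_apply : ∀ (v : Fin n → EuclideanSpace ℝ (Fin n)) (i : Fin n),
      (∑ t, v t) i = ∑ t, v t i := by
    intro v i
    rw [show (∑ t, v t) i = EuclideanSpace.proj (𝕜 := ℝ) i (∑ t, v t) from rfl, map_sum]
    rfl
  have hC : ∀ i : Fin n, fderiv ℝ ψ x (fderiv ℝ F x (EuclideanSpace.single i 1)) i
      = ∑ t, fderiv ℝ F x (EuclideanSpace.single i 1) t
          * fderiv ℝ ψ x (EuclideanSpace.single t 1) i := by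
    intro i
    rw [expand_clm (fderiv ℝ ψ x), hsum_apply]
    simp [PiLp.smul_apply]
  have hD : ∀ i : Fin n, f'' (EuclideanSpace.single i 1) (F x) i
      = ∑ j, F x j * f'' (EuclideanSpace.single i 1) (EuclideanSpace.single j 1) i := by
    intro i
    rw [expand_clm (f'' (EuclideanSpace.single i 1)), hsum_apply]
    simp [PiLp.smul_apply]
  simp_rw [hC, hD]
  rw [Finset.sum_sub_distrib, Finset.sum_add_distrib, Finset.sum_add_distrib]
  have hBD : ∑ i : Fin n, (∑ j : Fin n, f'' (EuclideanSpace.single i 1) (EuclideanSpace.single j 1) j) * F x i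
      = ∑ i : Fin n, ∑ j : Fin n, F x j * f'' (EuclideanSpace.single i 1) (EuclideanSpace.single j 1) i := by
    rw [Finset.sum_comm]
    refine Finset.sum_congr rfl fun i _ => ?_
    rw [Finset.sum_mul]
    refine Finset.sum_congr rfl fun j _ => ?_
    rw [hsymm (EuclideanSpace.single j 1) (EuclideanSpace.single i 1)]
    ring
  have hCeq : ∑ i : Fin n, ∑ t : Fin n, fderiv ℝ F x (EuclideanSpace.single i 1) t
        * fderiv ℝ ψ x (EuclideanSpace.single t 1) i
      = ∑ i : Fin n, ∑ t : Fin n, fderiv ℝ F x (EuclideanSpace.single t 1) i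
        * fderiv ℝ ψ x (EuclideanSpace.single i 1) t := by rw [Finset.sum_comm]
  rw [hBD, hCeq, ← Finset.mul_sum]
  ring


/-- Boundary identity (Lemma on `B_ψ`): let `Ω ⊂ ℝⁿ` be a bounded `C¹` domain with
outward unit normal `ν`, surface measure `σb` on `∂Ω` (for which the divergence
theorem `hGG` holds), `ψ` a `C²` vector field, `u, φ ∈ C²`, and `F = uφN` where `N`
is a `C¹` extension of `ν`. Then
`∫_Ω [∂ᵢFᵢ div ψ − ∂_t Fᵢ ∂ᵢψ_t] dx = ∫_{∂Ω} uφ (div ψ − Σ_r ∂_ν ψ_r ν_r) dσ`. -/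
theorem stmt19 {n : ℕ} (Ω : Set (EuclideanSpace ℝ (Fin n))) (hΩ : IsOpen Ω)
    (hΩb : Bornology.IsBounded Ω)
    (σb : Measure (EuclideanSpace ℝ (Fin n)))
    (hsupp : ∀ᵐ x ∂σb, x ∈ frontier Ω)
    (ν : EuclideanSpace ℝ (Fin n) → EuclideanSpace ℝ (Fin n))
    (hν : ∀ x ∈ frontier Ω, ‖ν x‖ = 1)
    -- the divergence (Gauss–Green) theorem on `Ω` with outward normal `ν`
    (hGG : ∀ f : EuclideanSpace ℝ (Fin n) → EuclideanSpace ℝ (Fin n), ContDiff ℝ 1 f →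
      (∫ x in Ω, ∑ i : Fin n, fderiv ℝ f x (EuclideanSpace.single i 1) i) =
        ∫ x, ⟪f x, ν x⟫ ∂σb)
    (ψ : EuclideanSpace ℝ (Fin n) → EuclideanSpace ℝ (Fin n)) (hψ : ContDiff ℝ 2 ψ)
    (u φ : EuclideanSpace ℝ (Fin n) → ℝ) (hu : ContDiff ℝ 2 u) (hφ : ContDiff ℝ 2 φ)
    (N : EuclideanSpace ℝ (Fin n) → EuclideanSpace ℝ (Fin n)) (hN : ContDiff ℝ 1 N)
    (hNν : ∀ x ∈ frontier Ω, N x = ν x)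
    (F : EuclideanSpace ℝ (Fin n) → EuclideanSpace ℝ (Fin n))
    (hF : F = fun x => (u x * φ x) • N x) :
    (∫ x in Ω,
        ((∑ i : Fin n, fderiv ℝ F x (EuclideanSpace.single i 1) i) *
            (∑ i : Fin n, fderiv ℝ ψ x (EuclideanSpace.single i 1) i) -
          ∑ i : Fin n, ∑ t : Fin n,
            fderiv ℝ F x (EuclideanSpace.single t 1) i *
              fderiv ℝ ψ x (EuclideanSpace.single i 1) t)) =
      ∫ x, u x * φ x *
        ((∑ i : Fin n, fderiv ℝ ψ x (EuclideanSpace.single i 1) i) -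
          ∑ r : Fin n, fderiv ℝ ψ x (ν x) r * ν x r) ∂σb := by
  have hF1 : ContDiff ℝ 1 F := by
    rw [hF]
    exact ((hu.of_le one_le_two).mul (hφ.of_le one_le_two)).smul hN
  have hψ' : ContDiff ℝ 1 (fderiv ℝ ψ) := hψ.fderiv_right (le_refl 2)
  -- the auxiliary vector field G
  set G : EuclideanSpace ℝ (Fin n) → EuclideanSpace ℝ (Fin n) :=
    fun y => (∑ j, fderiv ℝ ψ y (EuclideanSpace.single j 1) j) • F y
      - fderiv ℝ ψ y (F y) with hGdef
  have hGc : ContDiff ℝ 1 G := by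
    apply ContDiff.sub
    · apply ContDiff.smul (f := fun y => ∑ j, fderiv ℝ ψ y (EuclideanSpace.single j 1) j) _ hF1
      apply ContDiff.sum
      intro j _
      exact (EuclideanSpace.proj (𝕜 := ℝ) j).contDiff.comp (hψ'.clm_apply contDiff_const)
    · exact hψ'.clm_apply hF1
  have hdiv := hGG G hGc
  have hL : (∫ x in Ω,
        ((∑ i : Fin n, fderiv ℝ F x (EuclideanSpace.single i 1) i) *
            (∑ i : Fin n, fderiv ℝ ψ x (EuclideanSpace.single i 1) i) -
          ∑ i : Fin n, ∑ t : Fin n,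
            fderiv ℝ F x (EuclideanSpace.single t 1) i *
              fderiv ℝ ψ x (EuclideanSpace.single i 1) t)) =
      ∫ x in Ω, ∑ i : Fin n, fderiv ℝ G x (EuclideanSpace.single i 1) i := by
    apply integral_congr_ae
    filter_upwards with x
    exact (div_identity ψ hψ F hF1 x).symm
  have hR : (∫ x, ⟪G x, ν x⟫ ∂σb) =
      ∫ x, u x * φ x *
        ((∑ i : Fin n, fderiv ℝ ψ x (EuclideanSpace.single i 1) i) -
          ∑ r : Fin n, fderiv ℝ ψ x (ν x) r * ν x r) ∂σb := by
    apply integral_congr_ae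
    filter_upwards [hsupp] with x hx
    have hFx : F x = (u x * φ x) • ν x := by rw [hF]; simp only [hNν x hx]
    have h2 : fderiv ℝ ψ x (F x) = (u x * φ x) • fderiv ℝ ψ x (ν x) := by
      rw [hFx, _root_.map_smul]
    have hinner : ⟪fderiv ℝ ψ x (ν x), ν x⟫ = ∑ r, fderiv ℝ ψ x (ν x) r * ν x r := by
      simp [PiLp.inner_apply, RCLike.inner_apply, conj_trivial]
      exact Finset.sum_congr rfl fun _ _ => mul_comm _ _
    have hnn : ⟪ν x, ν x⟫ = 1 := by
      rw [real_inner_self_eq_norm_sq, hν x hx]; norm_num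
    rw [hGdef]
    simp only
    rw [inner_sub_left, real_inner_smul_left, hFx, real_inner_smul_left, hnn,
      _root_.map_smul, real_inner_smul_left, hinner]
    ring
  rw [hL, hdiv, hR]
end
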